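/- arXiv:2211.03168 — 3 statements merged into one kernel-verified Lean document; each statement's English description precedes it below -/
import Mathlib

section
/- Let $k \le n$ be positive integers, let $X$ be a set, and let $\mathbf{x} \in X^k$, $\mathbf{i} \in [k]^k$, $\mathbf{a} \in [n]^k$. Then the number of tuples $\mathbf{b} \in [n]^k$ such that $\mathbf{b}_{\mathbf{i}} = \mathbf{a}$ and $\mathbf{b} \sim \mathbf{x}$ equals $(n - |\mathbf{x}_{\mathbf{i}}|)! / (n - |\mathbf{x}|)!$ if $\mathbf{a} \sim \mathbf{x}_{\mathbf{i}}$, and equals $0$ otherwise. -/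
open Function in
noncomputable def extendEquiv {α β : Type*} [DecidableEq α] [DecidableEq β]
    (s : Set α) [DecidablePred (· ∈ s)] (g : ↥s ↪ β) :
    {f : α ↪ β // ∀ t : ↥s, f t = g t} ≃ ((↥sᶜ) ↪ ↥(Set.range g)ᶜ) where
  toFun f := ⟨fun t => ⟨f.1 t.1, by
      intro hmem
      obtain ⟨u, hu⟩ := hmem
      have : f.1 u.1 = f.1 t.1 := by rw [f.2 u, hu]
      exact t.2 (f.1.injective this ▸ u.2)⟩, by
      intro t t' htt'
      exact Subtype.ext (f.1.injective (congrArg Subtype.val htt'))⟩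
  invFun e := ⟨⟨fun t => if h : t ∈ s then g ⟨t, h⟩ else (e ⟨t, h⟩).1, by
      intro t t' htt'
      dsimp only at htt'
      by_cases h : t ∈ s <;> by_cases h' : t' ∈ s
      · rw [dif_pos h, dif_pos h'] at htt'
        exact congrArg Subtype.val (g.injective htt')
      · rw [dif_pos h, dif_neg h'] at htt'
        exact absurd ⟨⟨t, h⟩, htt'⟩ (e ⟨t', h'⟩).2
      · rw [dif_neg h, dif_pos h'] at htt'
        exact absurd ⟨⟨t', h'⟩, htt'.symm⟩ (e ⟨t, h⟩).2
      · rw [dif_neg h, dif_neg h'] at htt'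
        exact congrArg Subtype.val (e.injective (Subtype.ext htt'))⟩, by
      intro t
      exact dif_pos t.2⟩
  left_inv f := by
    apply Subtype.ext
    apply Function.Embedding.ext
    intro t
    by_cases h : t ∈ s
    · simp only [Function.Embedding.coeFn_mk, dif_pos h]
      exact (f.2 ⟨t, h⟩).symm
    · simp only [Function.Embedding.coeFn_mk, dif_neg h]
      rfl
  right_inv e := by
    apply Function.Embedding.ext
    intro t
    apply Subtype.ext
    simp only [Function.Embedding.coeFn_mk, dif_neg t.2]
    exact dif_neg t.2

open Function in
theorem card_extend {α β : Type*} [Fintype α] [Fintype β] [DecidableEq α] [DecidableEq β]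
    (s : Set α) [DecidablePred (· ∈ s)] (g : ↥s ↪ β) :
    Nat.card {f : α ↪ β // ∀ t : ↥s, f t = g t} =
      (Fintype.card β - Nat.card ↥s).descFactorial (Fintype.card α - Nat.card ↥s) := by
  classical
  rw [Nat.card_congr (extendEquiv s g)]
  rw [Nat.card_eq_fintype_card, Fintype.card_embedding_eq, Fintype.card_compl_set,
    Fintype.card_compl_set, Nat.card_eq_fintype_card]
  congr 1
  rw [Set.card_range_of_injective g.injective]

open Classical in
/-- Lemma: counting tuples `b ∈ [n]^k` with `b ∘ i = a` and `b ∼ x`. -/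
theorem stmt_0 {X : Type*} (k n : ℕ) (hk : 0 < k) (hkn : k ≤ n)
    (x : Fin k → X) (i : Fin k → Fin k) (a : Fin k → Fin n) :
    Nat.card {b : Fin k → Fin n //
        (∀ j, b (i j) = a j) ∧ (∀ p q, b p = b q ↔ x p = x q)} =
      if ∀ p q, a p = a q ↔ x (i p) = x (i q) then
        Nat.factorial (n - (Set.range (x ∘ i)).ncard) /
          Nat.factorial (n - (Set.range x).ncard)
      else 0 := by
  classical
  split_ifs with h
  case neg =>
    have : IsEmpty {b : Fin k → Fin n //
        (∀ j, b (i j) = a j) ∧ (∀ p q, b p = b q ↔ x p = x q)} := by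
      constructor
      rintro ⟨b, hb1, hb2⟩
      exact h fun p q => by rw [← hb1 p, ← hb1 q, hb2]
    exact Nat.card_of_isEmpty
  case pos =>
  haveI : Fintype ↥(Set.range x) := (Set.finite_range x).fintype
  -- the canonical map to the "quotient" (range of x)
  set q : Fin k → ↥(Set.range x) := fun j => ⟨x j, ⟨j, rfl⟩⟩ with hqdef
  have hq : ∀ p p', q p = q p' ↔ x p = x p' := fun p p' =>
    ⟨fun hpq => congrArg Subtype.val hpq, fun hx => Subtype.ext hx⟩
  set s : Set ↥(Set.range x) := Set.range (fun j => q (i j)) with hsdef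
  -- representatives
  have hrepex : ∀ t : ↥(Set.range x), ∃ j, x j = t.1 := fun t => t.2
  set rep : ↥(Set.range x) → Fin k := fun t => (hrepex t).choose with hrepdef
  have hrep : ∀ t, x (rep t) = t.1 := fun t => (hrepex t).choose_spec
  have hrepsex : ∀ t : ↥s, ∃ j, q (i j) = t.1 := fun t => t.2
  set reps : ↥s → Fin k := fun t => (hrepsex t).choose with hrepsdef
  have hreps : ∀ t, q (i (reps t)) = t.1 := fun t => (hrepsex t).choose_spec
  -- the prescribed partial embedding g
  have hg0 : ∀ (t : ↥s) (j : Fin k), q (i j) = t.1 → a (reps t) = a j := by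
    intro t j hj
    exact (h _ _).2 ((hq _ _).1 ((hreps t).trans hj.symm))
  set g : ↥s ↪ Fin n := ⟨fun t => a (reps t), by
    intro t t' htt'
    have h1 : x (i (reps t)) = x (i (reps t')) := (h _ _).1 htt'
    have h2 : q (i (reps t)) = q (i (reps t')) := (hq _ _).2 h1
    exact Subtype.ext ((hreps t).symm.trans (h2.trans (hreps t')))⟩ with hgdef
  have hg : ∀ (j : Fin k) (hm : q (i j) ∈ s), g ⟨q (i j), hm⟩ = a j := by
    intro j hm
    rw [hgdef]
    exact hg0 ⟨q (i j), hm⟩ j rfl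
  -- the equivalence with embedding extensions
  have key : ∀ (b : Fin k → Fin n), (∀ p p', b p = b p' ↔ x p = x p') →
      ∀ (t : ↥(Set.range x)) (j : Fin k), x j = t.1 → b (rep t) = b j := by
    intro b hb t j hj
    exact (hb _ _).2 ((hrep t).trans hj.symm)
  have eqv : {b : Fin k → Fin n //
        (∀ j, b (i j) = a j) ∧ (∀ p q, b p = b q ↔ x p = x q)}
      ≃ {f : ↥(Set.range x) ↪ Fin n // ∀ t : ↥s, f t = g t} := by
    refine ⟨fun bb => ⟨⟨fun t => bb.1 (rep t), ?_⟩, ?_⟩,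
      fun ff => ⟨fun j => ff.1 (q j), ?_, ?_⟩, ?_, ?_⟩
    · intro t t' htt'
      have := (bb.2.2 _ _).1 htt'
      exact Subtype.ext ((hrep t).symm.trans (this.trans (hrep t')))
    · intro t
      have h1 : x (i (reps t)) = (t.1 : ↥(Set.range x)).1 :=
        congrArg Subtype.val (hreps t)
      exact (key bb.1 bb.2.2 t.1 (i (reps t)) h1).trans (bb.2.1 (reps t))
    · intro j
      exact (ff.2 ⟨q (i j), ⟨j, rfl⟩⟩).trans (hg j ⟨j, rfl⟩)
    · intro p p'
      exact ⟨fun hh => (hq p p').1 (ff.1.injective hh),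
        fun hh => congrArg ff.1 ((hq _ _).2 hh)⟩
    · intro bb
      apply Subtype.ext
      funext j
      exact key bb.1 bb.2.2 (q j) j rfl
    · intro ff
      apply Subtype.ext
      apply Function.Embedding.ext
      intro t
      exact congrArg ff.1 (Subtype.ext (hrep t))
  rw [Nat.card_congr eqv, card_extend s g]
  -- identify cardinalities
  have hs : Nat.card ↥s = (Set.range (x ∘ i)).ncard := by
    have himg : Subtype.val '' s = Set.range (x ∘ i) := by
      ext y
      constructor
      · rintro ⟨t, ⟨j, hj⟩, rfl⟩
        exact ⟨j, congrArg Subtype.val hj⟩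
      · rintro ⟨j, rfl⟩
        exact ⟨q (i j), ⟨j, rfl⟩, rfl⟩
    rw [← himg, Set.ncard_image_of_injective s Subtype.val_injective,
      Nat.card_coe_set_eq]
  have hT : Fintype.card ↥(Set.range x) = (Set.range x).ncard := by
    rw [← Nat.card_eq_fintype_card, Nat.card_coe_set_eq]
  rw [hs, hT, Fintype.card_fin]
  -- inequalities
  have hsub : Set.range (x ∘ i) ⊆ Set.range x := by
    rintro y ⟨j, rfl⟩; exact ⟨i j, rfl⟩
  have hs0m : (Set.range (x ∘ i)).ncard ≤ (Set.range x).ncard :=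
    Set.ncard_le_ncard hsub (Set.finite_range x)
  have hmn : (Set.range x).ncard ≤ n := by
    calc (Set.range x).ncard = Fintype.card ↥(Set.range x) := hT.symm
      _ ≤ Fintype.card (Fin k) := Fintype.card_range_le x
      _ = k := Fintype.card_fin k
      _ ≤ n := hkn
  rw [Nat.descFactorial_eq_div (Nat.sub_le_sub_right hmn _)]
  rw [tsub_tsub_tsub_cancel_right hs0m]
end

section
/- Let $p, q$ be positive integers and $\mathbf{n} \in \mathbb{N}^q$. A $(p,\mathbf{n})$-system of shadows is realistic if and only if it is realisable. In particular, a family of $p$-dimensional integer tensors indexed by increasing $p$-tuples in $[q]$ arises as the family of oriented $p$-dimensional projections of a single $q$-dimensional integer tensor if and only if all pairs of its members have equal projections onto their common $(p-1)$-dimensional sub-hyperplanes. -/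
open Finset

/-- The projection of a tensor `C` of format `nn` onto the modes indexed by `i`. -/
def dproj {q p : ℕ} {nn : Fin q → ℕ} (C : ((t : Fin q) → Fin (nn t)) → ℤ)
    (i : Fin p → Fin q) : ((t : Fin p) → Fin (nn (i t))) → ℤ :=
  fun a => ∑ b : (t : Fin q) → Fin (nn t), if (fun t => b (i t)) = a then C b else 0

section Aux
variable {q : ℕ} {nn : Fin q → ℕ}

/-- Zero out the coordinates outside `A`. -/
def zOut (hnn : ∀ t, 0 < nn t) (A : Finset (Fin q)) (b : (t : Fin q) → Fin (nn t)) :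
    (t : Fin q) → Fin (nn t) :=
  fun t => if t ∈ A then b t else ⟨0, hnn t⟩

/-- Project onto coordinates in `A` and pad with zeros. -/
def Pp (hnn : ∀ t, 0 < nn t) (A : Finset (Fin q)) (C : ((t : Fin q) → Fin (nn t)) → ℤ) :
    ((t : Fin q) → Fin (nn t)) → ℤ :=
  fun b => ∑ c : (t : Fin q) → Fin (nn t), if zOut hnn A c = b then C c else 0

/-- Extend a point on the modes of `e` by zeros. -/
noncomputable def pext (hnn : ∀ t, 0 < nn t) {k : ℕ} (e : Fin k → Fin q) (a : (u : Fin k) → Fin (nn (e u))) :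
    (t : Fin q) → Fin (nn t) :=
  fun t => if h : ∃ s, e s = t then Fin.cast (congrArg nn h.choose_spec) (a h.choose)
    else ⟨0, hnn t⟩

/-- Embed a small tensor on the modes of `e` as a zero-padded full tensor. -/
def pad (hnn : ∀ t, 0 < nn t) {k : ℕ} (e : Fin k → Fin q)
    (D : ((u : Fin k) → Fin (nn (e u))) → ℤ) : ((t : Fin q) → Fin (nn t)) → ℤ :=
  fun b => if zOut hnn (Finset.image e Finset.univ) b = b then D (fun u => b (e u)) else 0

variable (hnn : ∀ t, 0 < nn t)

lemma zOut_zOut (A B : Finset (Fin q)) (b : (t : Fin q) → Fin (nn t)) :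
    zOut hnn A (zOut hnn B b) = zOut hnn (A ∩ B) b := by
  funext t
  simp only [zOut, Finset.mem_inter]
  by_cases hA : t ∈ A <;> by_cases hB : t ∈ B <;> simp [hA, hB]

lemma zOut_idem (A : Finset (Fin q)) (b : (t : Fin q) → Fin (nn t)) :
    zOut hnn A (zOut hnn A b) = zOut hnn A b := by
  rw [zOut_zOut, Finset.inter_self]

lemma Pp_Pp (A B : Finset (Fin q)) (C : ((t : Fin q) → Fin (nn t)) → ℤ) :
    Pp hnn A (Pp hnn B C) = Pp hnn (A ∩ B) C := by
  funext b
  simp only [Pp]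
  have h1 : ∀ c : (t : Fin q) → Fin (nn t),
      (if zOut hnn A c = b then
          ∑ d : (t : Fin q) → Fin (nn t), if zOut hnn B d = c then C d else 0 else 0)
        = ∑ d : (t : Fin q) → Fin (nn t),
            if zOut hnn B d = c then (if zOut hnn A c = b then C d else 0) else 0 := by
    intro c
    split
    · apply Finset.sum_congr rfl; intro d _; split <;> simp_all
    · symm; apply Finset.sum_eq_zero; intro d _; split <;> simp_all
  simp only [h1]
  rw [Finset.sum_comm]
  apply Finset.sum_congr rfl
  intro d _
  rw [Finset.sum_eq_single (zOut hnn B d)]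
  · rw [if_pos rfl, zOut_zOut]
  · intro c _ hc; rw [if_neg (fun h => hc h.symm)]
  · simp

lemma pext_comp {k : ℕ} (e : Fin k → Fin q) (he : Function.Injective e)
    (a : (u : Fin k) → Fin (nn (e u))) (s : Fin k) :
    pext hnn e a (e s) = a s := by
  have h : ∃ s', e s' = e s := ⟨s, rfl⟩
  have hc : h.choose = s := he h.choose_spec
  apply Fin.ext
  simp only [pext, dif_pos h, Fin.coe_cast]
  exact congrArg (fun x => (a x : ℕ)) hc

lemma pext_comp_fun {k : ℕ} (e : Fin k → Fin q) (he : Function.Injective e)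
    (a : (u : Fin k) → Fin (nn (e u))) :
    (fun s => pext hnn e a (e s)) = a :=
  funext fun s => pext_comp hnn e he a s

lemma zOut_pext {k : ℕ} (e : Fin k → Fin q) (a : (u : Fin k) → Fin (nn (e u))) :
    zOut hnn (Finset.image e Finset.univ) (pext hnn e a) = pext hnn e a := by
  funext t
  by_cases ht : t ∈ Finset.image e Finset.univ
  · simp [zOut, ht]
  · have hne : ¬ ∃ s, e s = t := by
      simpa [Finset.mem_image] using ht
    simp [zOut, ht, pext, dif_neg hne]

lemma fixed_eq_pext {k : ℕ} (e : Fin k → Fin q) (he : Function.Injective e)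
    (c : (t : Fin q) → Fin (nn t))
    (hc : zOut hnn (Finset.image e Finset.univ) c = c) :
    c = pext hnn e (fun s => c (e s)) := by
  funext t
  by_cases ht : t ∈ Finset.image e Finset.univ
  · obtain ⟨s, -, hs⟩ := Finset.mem_image.mp ht
    subst hs
    rw [pext_comp hnn e he _ s]
  · have hne : ¬ ∃ s, e s = t := by simpa [Finset.mem_image] using ht
    have := congrFun hc t
    simp only [zOut, if_neg ht] at this
    rw [← this]
    simp [pext, dif_neg hne]

end Aux

section Bridge
variable {q : ℕ} {nn : Fin q → ℕ} (hnn : ∀ t, 0 < nn t)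

lemma zOut_eq_pext {p : ℕ} (i : Fin p → Fin q) (hi : Function.Injective i)
    (c : (t : Fin q) → Fin (nn t)) :
    zOut hnn (Finset.image i Finset.univ) c = pext hnn i (fun s => c (i s)) := by
  funext t
  by_cases ht : t ∈ Finset.image i Finset.univ
  · obtain ⟨s, -, hs⟩ := Finset.mem_image.mp ht
    subst hs
    rw [pext_comp hnn i hi _ s]
    simp [zOut, Finset.mem_image_of_mem i (Finset.mem_univ s)]
  · have hne : ¬ ∃ s, i s = t := by simpa [Finset.mem_image] using ht
    simp only [zOut, if_neg ht, pext, dif_neg hne]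

lemma zOut_eq_pext_iff {p : ℕ} (i : Fin p → Fin q) (hi : Function.Injective i)
    (c : (t : Fin q) → Fin (nn t)) (a : (t : Fin p) → Fin (nn (i t))) :
    zOut hnn (Finset.image i Finset.univ) c = pext hnn i a ↔ (fun t => c (i t)) = a := by
  rw [zOut_eq_pext hnn i hi c]
  constructor
  · intro h
    calc (fun t => c (i t)) = fun s => pext hnn i (fun t => c (i t)) (i s) :=
          (pext_comp_fun hnn i hi _).symm
      _ = fun s => pext hnn i a (i s) := by rw [h]
      _ = a := pext_comp_fun hnn i hi a
  · intro h; rw [h]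

/-- Bridge: `dproj` in terms of `Pp`. -/
lemma dproj_eq_Pp {p : ℕ} (i : Fin p → Fin q) (hi : Function.Injective i)
    (C : ((t : Fin q) → Fin (nn t)) → ℤ) (a : (t : Fin p) → Fin (nn (i t))) :
    dproj C i a = Pp hnn (Finset.image i Finset.univ) C (pext hnn i a) := by
  simp only [dproj, Pp]
  apply Finset.sum_congr rfl
  intro c _
  congr 1
  exact (propext (zOut_eq_pext_iff hnn i hi c a)).symm

lemma pad_pext {p : ℕ} (i : Fin p → Fin q) (hi : Function.Injective i)
    (D : ((t : Fin p) → Fin (nn (i t))) → ℤ) (a : (t : Fin p) → Fin (nn (i t))) :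
    pad hnn i D (pext hnn i a) = D a := by
  rw [pad, if_pos (zOut_pext hnn i a), pext_comp_fun hnn i hi a]

/-- Composition of projections. -/
lemma dproj_comp {p k : ℕ} (C : ((t : Fin q) → Fin (nn t)) → ℤ)
    (i : Fin p → Fin q) (r : Fin k → Fin p) :
    dproj (dproj C i) r = dproj C (fun u => i (r u)) := by
  funext a
  simp only [dproj]
  have h1 : ∀ a' : (t : Fin p) → Fin (nn (i t)),
      (if (fun t => a' (r t)) = a then
          ∑ b : (t : Fin q) → Fin (nn t), if (fun t => b (i t)) = a' then C b else 0 else 0)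
        = ∑ b : (t : Fin q) → Fin (nn t),
            if (fun t => b (i t)) = a' then (if (fun t => a' (r t)) = a then C b else 0)
              else 0 := by
    intro a'
    split
    · apply Finset.sum_congr rfl; intro d _; split <;> simp_all
    · symm; apply Finset.sum_eq_zero; intro d _; split <;> simp_all
  simp only [h1]
  rw [Finset.sum_comm]
  apply Finset.sum_congr rfl
  intro b _
  rw [Finset.sum_eq_single (fun t => b (i t))]
  · rw [if_pos rfl]
  · intro c _ hc; rw [if_neg (fun h => hc h.symm)]
  · simp
end Bridge

/-- Truncated coefficients of `(1+x)^{-n}`, defined by recursion so that the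
convolution identity holds definitionally. -/
def mu (n : ℕ) : ℕ → ℤ
  | 0 => 1
  | j+1 => -∑ m ∈ Finset.range (j+1), (n.choose (m+1) : ℤ) * mu n (j - m)
decreasing_by simpa using Nat.lt_succ_of_le (Nat.sub_le j m)

lemma mu_spec (n j : ℕ) :
    ∑ m ∈ Finset.range (j+1), (n.choose m : ℤ) * mu n (j - m) = if j = 0 then 1 else 0 := by
  cases j with
  | zero => simp [mu]
  | succ j =>
    rw [Finset.sum_range_succ']
    simp only [Nat.choose_zero_right, Nat.cast_one, one_mul, Nat.sub_zero]
    rw [if_neg (Nat.succ_ne_zero j)]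
    have : mu n (j+1) = -∑ m ∈ Finset.range (j+1), (n.choose (m+1) : ℤ) * mu n (j - m) := by
      rw [mu]
    rw [this]
    have hs : ∀ m ∈ Finset.range (j+1),
        (n.choose (m+1) : ℤ) * mu n (j + 1 - (m + 1)) = (n.choose (m+1) : ℤ) * mu n (j - m) := by
      intro m _
      congr 2
      omega
    rw [Finset.sum_congr rfl hs]
    ring

section Key
variable {q : ℕ} {nn : Fin q → ℕ} (hnn : ∀ t, 0 < nn t)

/-- Key lemma: projecting an embedded tensor onto a sub-tuple of its modes. -/
lemma Pp_pad {m k : ℕ} (e : Fin m → Fin q) (he : Function.Injective e)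
    (r : Fin k → Fin m) (D : ((t : Fin m) → Fin (nn (e t))) → ℤ) :
    Pp hnn (Finset.image (fun u => e (r u)) Finset.univ) (pad hnn e D)
      = pad hnn (fun u => e (r u)) (dproj D r) := by
  funext b
  set E' : Finset (Fin q) := Finset.image (fun u => e (r u)) Finset.univ with hE'
  simp only [Pp, pad, dproj]
  -- merge the two ifs
  have h1 : ∀ c : (t : Fin q) → Fin (nn t),
      (if zOut hnn E' c = b then
        (if zOut hnn (Finset.image e Finset.univ) c = c then D (fun t => c (e t)) else 0) else 0)
      = if (zOut hnn (Finset.image e Finset.univ) c = c ∧ zOut hnn E' c = b)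
          then D (fun t => c (e t)) else 0 := by
    intro c; split <;> split <;> simp_all
  simp only [h1]
  rw [← Finset.sum_filter]
  -- reindex by restriction to the modes of `e`
  have h2 : ∑ c ∈ Finset.filter
        (fun c => zOut hnn (Finset.image e Finset.univ) c = c ∧ zOut hnn E' c = b)
        Finset.univ, D (fun t => c (e t))
      = ∑ a ∈ Finset.filter (fun a => zOut hnn E' (pext hnn e a) = b) Finset.univ, D a := by
    apply Finset.sum_nbij' (fun c => fun t => c (e t)) (fun a => pext hnn e a)
    · intro c hc
      simp only [Finset.mem_filter, Finset.mem_univ, true_and] at hc ⊢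
      rw [← fixed_eq_pext hnn e he c hc.1]
      exact hc.2
    · intro a ha
      simp only [Finset.mem_filter, Finset.mem_univ, true_and] at ha ⊢
      exact ⟨zOut_pext hnn e a, ha⟩
    · intro c hc
      simp only [Finset.mem_filter, Finset.mem_univ, true_and] at hc
      exact (fixed_eq_pext hnn e he c hc.1).symm
    · intro a _
      exact pext_comp_fun hnn e he a
    · intro c _
      rfl
  rw [h2]
  by_cases hb : zOut hnn E' b = b
  · rw [if_pos hb, ← Finset.sum_filter]
    apply Finset.sum_congr _ (fun _ _ => rfl)
    apply Finset.filter_congr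
    intro a _
    constructor
    · intro h
      funext u
      have h4 := congrFun h (e (r u))
      have hm : e (r u) ∈ E' := by simp [hE']
      rw [show zOut hnn E' (pext hnn e a) (e (r u)) = pext hnn e a (e (r u)) from by
        simp [zOut, hm]] at h4
      rwa [pext_comp hnn e he a (r u)] at h4
    · intro h
      funext t
      by_cases ht : t ∈ E'
      · simp only [hE', Finset.mem_image, Finset.mem_univ, true_and] at ht
        obtain ⟨u, hu⟩ := ht
        subst hu
        have h3 : e (r u) ∈ E' := by
          simp [hE', Finset.mem_image]
        simp only [zOut, if_pos h3]
        rw [pext_comp hnn e he a (r u)]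
        exact congrFun h u
      · have hbt := congrFun hb t
        simp only [zOut, if_neg ht] at hbt ⊢
        exact hbt
  · rw [if_neg hb]
    apply Finset.sum_eq_zero
    intro a ha
    exfalso
    simp only [Finset.mem_filter, Finset.mem_univ, true_and] at ha
    apply hb
    conv_lhs => rw [← ha]
    rw [zOut_idem, ha]

end Key

section More
variable {q : ℕ} {nn : Fin q → ℕ} (hnn : ∀ t, 0 < nn t)

lemma dproj_id {m : ℕ} {mm : Fin m → ℕ} (D : ((t : Fin m) → Fin (mm t)) → ℤ) :
    dproj D (fun u => u) = D := by
  funext a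
  simp only [dproj]
  rw [Finset.sum_eq_single a]
  · rw [if_pos rfl]
  · intro c _ hc; rw [if_neg (fun h => hc h)]
  · simp

lemma Pp_pad_self {m : ℕ} (e : Fin m → Fin q) (he : Function.Injective e)
    (D : ((t : Fin m) → Fin (nn (e t))) → ℤ) :
    Pp hnn (Finset.image e Finset.univ) (pad hnn e D) = pad hnn e D := by
  have h := Pp_pad hnn e he (fun u => u) D
  rwa [dproj_id] at h

lemma pad_congr {k : ℕ} (e₁ e₂ : Fin k → Fin q) (h : e₁ = e₂)
    (D₁ : ((u : Fin k) → Fin (nn (e₁ u))) → ℤ) (D₂ : ((u : Fin k) → Fin (nn (e₂ u))) → ℤ)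
    (hD : HEq D₁ D₂) : pad hnn e₁ D₁ = pad hnn e₂ D₂ := by
  subst h
  rw [eq_of_heq hD]

lemma dproj_congr {k : ℕ} (C : ((t : Fin q) → Fin (nn t)) → ℤ) (e₁ e₂ : Fin k → Fin q)
    (h : e₁ = e₂) : HEq (dproj C e₁) (dproj C e₂) := by
  subst h; rfl

/-- A strictly monotone map is determined by its image. -/
lemma strictMono_eq_of_image_eq {p : ℕ} {i j : Fin p → Fin q} (hi : StrictMono i)
    (hj : StrictMono j) (h : Finset.image i Finset.univ = Finset.image j Finset.univ) :
    i = j := by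
  have hcard : (Finset.image i Finset.univ).card = p := by
    rw [Finset.card_image_of_injective _ hi.injective, Finset.card_univ, Fintype.card_fin]
  have h1 : i = (Finset.image i Finset.univ).orderEmbOfFin hcard := by
    apply Finset.orderEmbOfFin_unique hcard _ hi
    intro x; exact Finset.mem_image_of_mem i (Finset.mem_univ x)
  have h2 : j = (Finset.image i Finset.univ).orderEmbOfFin hcard := by
    apply Finset.orderEmbOfFin_unique hcard _ hj
    intro x; rw [h]; exact Finset.mem_image_of_mem j (Finset.mem_univ x)
  rw [h1, h2]

/-- Factor a strictly monotone map through a larger one containing its image. -/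
lemma strictMono_factor {p k : ℕ} {i : Fin p → Fin q} {e : Fin k → Fin q}
    (hi : StrictMono i) (he : StrictMono e)
    (hsub : ∀ u, ∃ s, i s = e u) :
    ∃ r : Fin k → Fin p, StrictMono r ∧ ∀ u, i (r u) = e u := by
  refine ⟨fun u => (hsub u).choose, ?_, fun u => (hsub u).choose_spec⟩
  intro u v huv
  have h1 : i ((hsub u).choose) < i ((hsub v).choose) := by
    rw [(hsub u).choose_spec, (hsub v).choose_spec]
    exact he huv
  exact hi.lt_iff_lt.mp h1

lemma image_orderEmbOfFin {s : Finset (Fin q)} {k : ℕ} (h : s.card = k) :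
    Finset.image (s.orderEmbOfFin h) Finset.univ = s := by
  ext t
  simp only [Finset.mem_image, Finset.mem_univ, true_and]
  constructor
  · rintro ⟨u, rfl⟩; exact Finset.orderEmbOfFin_mem s h u
  · intro ht
    have := Finset.range_orderEmbOfFin s h
    have ht' : t ∈ Set.range (s.orderEmbOfFin h) := by rw [this]; exact ht
    exact ht'

end More

section Chain
variable {q p : ℕ} {nn : Fin q → ℕ} (hnn : ∀ t, 0 < nn t)
  (S : (i : Fin p → Fin q) → ((t : Fin p) → Fin (nn (i t))) → ℤ)

/-- Narrow a projection identity from a larger subset to a smaller one. -/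
lemma Pp_narrow {A K : Finset (Fin q)} (hAK : A ⊆ K)
    {X Y : ((t : Fin q) → Fin (nn t)) → ℤ} (h : Pp hnn K X = Pp hnn K Y) :
    Pp hnn A X = Pp hnn A Y := by
  have h2 : Pp hnn A (Pp hnn K X) = Pp hnn A (Pp hnn K Y) := by rw [h]
  rwa [Pp_Pp, Pp_Pp, Finset.inter_eq_left.mpr hAK] at h2

lemma step1
    (H : ∀ (i j : Fin p → Fin q), StrictMono i → StrictMono j →
      ∀ (r s : Fin (p - 1) → Fin p), StrictMono r → StrictMono s →
        (fun t => i (r t)) = (fun t => j (s t)) →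
          HEq (dproj (S i) r) (dproj (S j) s))
    (i j : Fin p → Fin q) (hi : StrictMono i) (hj : StrictMono j)
    (K : Finset (Fin q)) (hKi : K ⊆ Finset.image i Finset.univ)
    (hKj : K ⊆ Finset.image j Finset.univ) (hKcard : K.card = p - 1) :
    Pp hnn K (pad hnn i (S i)) = Pp hnn K (pad hnn j (S j)) := by
  set e := K.orderEmbOfFin hKcard with he
  have heK : Finset.image (⇑e) Finset.univ = K := image_orderEmbOfFin hKcard
  have hie : ∀ u, ∃ s, i s = e u := by
    intro u
    have : (e u : Fin q) ∈ Finset.image i Finset.univ :=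
      hKi (Finset.orderEmbOfFin_mem K hKcard u)
    obtain ⟨s, -, hs⟩ := Finset.mem_image.mp this
    exact ⟨s, hs⟩
  have hje : ∀ u, ∃ s, j s = e u := by
    intro u
    have : (e u : Fin q) ∈ Finset.image j Finset.univ :=
      hKj (Finset.orderEmbOfFin_mem K hKcard u)
    obtain ⟨s, -, hs⟩ := Finset.mem_image.mp this
    exact ⟨s, hs⟩
  obtain ⟨r, hr, hir⟩ := strictMono_factor hi e.strictMono hie
  obtain ⟨s, hs, hjs⟩ := strictMono_factor hj e.strictMono hje
  have hirjs : (fun t => i (r t)) = (fun t => j (s t)) := by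
    funext u; rw [hir, hjs]
  have hH := H i j hi hj r s hr hs hirjs
  have hKi' : K = Finset.image (fun u => i (r u)) Finset.univ := by
    rw [show (fun u => i (r u)) = ⇑e from funext hir, heK]
  have hKj' : K = Finset.image (fun u => j (s u)) Finset.univ := by
    rw [show (fun u => j (s u)) = ⇑e from funext hjs, heK]
  calc Pp hnn K (pad hnn i (S i))
      = pad hnn (fun u => i (r u)) (dproj (S i) r) := by
        rw [hKi']; exact Pp_pad hnn i hi.injective r (S i)
    _ = pad hnn (fun u => j (s u)) (dproj (S j) s) :=
        pad_congr hnn _ _ hirjs _ _ hH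
    _ = Pp hnn K (pad hnn j (S j)) := by
        rw [hKj']; exact (Pp_pad hnn j hj.injective s (S j)).symm

lemma welldef (hp : 0 < p)
    (H : ∀ (i j : Fin p → Fin q), StrictMono i → StrictMono j →
      ∀ (r s : Fin (p - 1) → Fin p), StrictMono r → StrictMono s →
        (fun t => i (r t)) = (fun t => j (s t)) →
          HEq (dproj (S i) r) (dproj (S j) s)) :
    ∀ (n : ℕ) (i j : Fin p → Fin q), StrictMono i → StrictMono j →
      (Finset.image i Finset.univ \ Finset.image j Finset.univ).card = n →
      ∀ A : Finset (Fin q), A ⊆ Finset.image i Finset.univ →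
        A ⊆ Finset.image j Finset.univ →
        Pp hnn A (pad hnn i (S i)) = Pp hnn A (pad hnn j (S j)) := by
  intro n
  induction n using Nat.strong_induction_on with
  | _ n IH =>
    intro i j hi hj hn A hAi hAj
    set I := Finset.image i Finset.univ with hI
    set J := Finset.image j Finset.univ with hJ
    have hIcard : I.card = p := by
      rw [hI, Finset.card_image_of_injective _ hi.injective, Finset.card_univ,
        Fintype.card_fin]
    have hJcard : J.card = p := by
      rw [hJ, Finset.card_image_of_injective _ hj.injective, Finset.card_univ,
        Fintype.card_fin]
    rcases Nat.eq_zero_or_pos n with h0 | hpos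
    · -- I = J, hence i = j
      have hsub : I ⊆ J := by
        rw [← Finset.sdiff_eq_empty_iff_subset]
        exact Finset.card_eq_zero.mp (h0 ▸ hn)
      have hIJ : I = J := Finset.eq_of_subset_of_card_le hsub (by omega)
      have : i = j := strictMono_eq_of_image_eq hi hj hIJ
      rw [this]
    · -- pick a ∈ I \ J, b ∈ J \ I, swap
      have hne : (I \ J).Nonempty := by
        rw [← Finset.card_pos, hn]; exact hpos
      obtain ⟨a, ha⟩ := hne
      have haI : a ∈ I := (Finset.mem_sdiff.mp ha).1
      have haJ : a ∉ J := (Finset.mem_sdiff.mp ha).2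
      have hJIcard : (J \ I).card = (I \ J).card := by
        have h1 := Finset.card_sdiff_add_card_inter J I
        have h2 := Finset.card_sdiff_add_card_inter I J
        rw [Finset.inter_comm] at h1
        omega
      have hneJ : (J \ I).Nonempty := by
        rw [← Finset.card_pos, hJIcard, hn]; exact hpos
      obtain ⟨b, hb⟩ := hneJ
      have hbJ : b ∈ J := (Finset.mem_sdiff.mp hb).1
      have hbI : b ∉ I := (Finset.mem_sdiff.mp hb).2
      set I' : Finset (Fin q) := insert b (I.erase a) with hI'def
      have hI'card : I'.card = p := by
        rw [hI'def, Finset.card_insert_of_notMem (fun h => hbI (Finset.erase_subset a I h)),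
          Finset.card_erase_of_mem haI, hIcard]
        omega
      set i' := I'.orderEmbOfFin hI'card with hi'def
      have hi'mono : StrictMono ⇑i' := i'.strictMono
      have hI'img : Finset.image (⇑i') Finset.univ = I' := image_orderEmbOfFin hI'card
      set K := I.erase a with hKdef
      have hKcard : K.card = p - 1 := by
        rw [hKdef, Finset.card_erase_of_mem haI, hIcard]
      have hKI : K ⊆ I := Finset.erase_subset a I
      have hKI' : K ⊆ I' := Finset.subset_insert b _
      have hAK : A ⊆ K := by
        intro x hx
        rw [hKdef, Finset.mem_erase]
        exact ⟨fun h => haJ (h ▸ hAj hx), hAi hx⟩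
      have hstep : Pp hnn A (pad hnn i (S i)) = Pp hnn A (pad hnn (⇑i') (S ⇑i')) :=
        Pp_narrow hnn hAK (step1 hnn S H i (⇑i') hi hi'mono K hKI (hI'img ▸ hKI') hKcard)
      have hnext : Pp hnn A (pad hnn (⇑i') (S ⇑i')) = Pp hnn A (pad hnn j (S j)) := by
        apply IH ((Finset.image (⇑i') Finset.univ \ J).card) ?_ (⇑i') j hi'mono hj rfl A
          ?_ hAj
        · rw [hI'img]
          have hseq : I' \ J = (I \ J).erase a := by
            rw [hI'def]
            ext x
            rw [hKdef] at *
            simp only [Finset.mem_sdiff, Finset.mem_insert, Finset.mem_erase]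
            constructor
            · rintro ⟨hx1 | hx1, hx2⟩
              · exact absurd hbJ (hx1 ▸ hx2)
              · exact ⟨hx1.1, hx1.2, hx2⟩
            · rintro ⟨hx1, hx2, hx3⟩
              exact ⟨Or.inr ⟨hx1, hx2⟩, hx3⟩
          rw [hseq, Finset.card_erase_of_mem ha, hn]
          omega
        · rw [hI'img]; exact hAK.trans hKI'
      rw [hstep, hnext]

end Chain

lemma count_range (p n b₀ : ℕ) (hb : b₀ ≤ p) :
    ∑ m ∈ Finset.range (n+1),
        (n.choose m : ℤ) * (if b₀ + m ≤ p then mu n (p - b₀ - m) else 0)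
      = if b₀ = p then 1 else 0 := by
  set j := p - b₀ with hj
  have hsummand : ∀ m, (if b₀ + m ≤ p then mu n (p - b₀ - m) else 0)
      = (if m ≤ j then mu n (j - m) else 0) := by
    intro m
    have h1 : b₀ + m ≤ p ↔ m ≤ j := by omega
    simp only [h1, hj]
  refine (Finset.sum_congr rfl (fun m _ => by rw [hsummand m]) :
    ∑ m ∈ Finset.range (n+1), (n.choose m : ℤ) * (if b₀ + m ≤ p then mu n (p - b₀ - m) else 0)
      = ∑ m ∈ Finset.range (n+1), (n.choose m : ℤ) * (if m ≤ j then mu n (j - m) else 0)).trans ?_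
  have hext : ∑ m ∈ Finset.range (n+1),
      (n.choose m : ℤ) * (if m ≤ j then mu n (j - m) else 0)
      = ∑ m ∈ Finset.range (n+j+1), (n.choose m : ℤ) * (if m ≤ j then mu n (j - m) else 0) := by
    apply Finset.sum_subset
    · apply Finset.range_subset_range.mpr; omega
    · intro m _ hm
      rw [Finset.mem_range, not_lt] at hm
      rw [Nat.choose_eq_zero_of_lt (by omega), Nat.cast_zero, zero_mul]
  rw [hext]
  have hshrink : ∑ m ∈ Finset.range (n+j+1), (n.choose m : ℤ) * (if m ≤ j then mu n (j - m) else 0)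
      = ∑ m ∈ Finset.range (j+1), (n.choose m : ℤ) * (if m ≤ j then mu n (j - m) else 0) := by
    symm
    apply Finset.sum_subset
    · apply Finset.range_subset_range.mpr; omega
    · intro m _ hm
      rw [Finset.mem_range, not_lt] at hm
      rw [if_neg (by omega), mul_zero]
  rw [hshrink]
  have hin : ∀ m ∈ Finset.range (j+1),
      (n.choose m : ℤ) * (if m ≤ j then mu n (j - m) else 0)
        = (n.choose m : ℤ) * mu n (j - m) := by
    intro m hm
    rw [Finset.mem_range] at hm
    rw [if_pos (by omega)]
  rw [Finset.sum_congr rfl hin, mu_spec]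
  have : j = 0 ↔ b₀ = p := by omega
  simp only [this]

lemma count_subsets {q p : ℕ} (hpq : p ≤ q) (I B : Finset (Fin q)) (hB : B ⊆ I)
    (hI : I.card = p) :
    ∑ A ∈ Finset.filter (fun A => A ∩ I = B) (Finset.univ : Finset (Fin q)).powerset,
        (if A.card ≤ p then mu (q - p) (p - A.card) else 0)
      = if B = I then 1 else 0 := by
  have hbij : ∑ A ∈ Finset.filter (fun A => A ∩ I = B) (Finset.univ : Finset (Fin q)).powerset,
        (if A.card ≤ p then mu (q - p) (p - A.card) else 0)
      = ∑ D ∈ Iᶜ.powerset,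
        (if B.card + D.card ≤ p then mu (q - p) (p - (B.card + D.card)) else 0) := by
    apply Finset.sum_nbij' (fun A => A \ I) (fun D => B ∪ D)
    · intro A hA
      rw [Finset.mem_powerset]
      intro x hx
      rw [Finset.mem_compl]
      exact (Finset.mem_sdiff.mp hx).2
    · intro D hD
      rw [Finset.mem_powerset] at hD
      simp only [Finset.mem_filter, Finset.mem_powerset]
      refine ⟨Finset.subset_univ _, ?_⟩
      ext x
      simp only [Finset.mem_inter, Finset.mem_union]
      constructor
      · rintro ⟨hx1 | hx1, hx2⟩
        · exact hx1
        · exact absurd hx2 (Finset.mem_compl.mp (hD hx1))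
      · intro hx; exact ⟨Or.inl hx, hB hx⟩
    · intro A hA
      simp only [Finset.mem_filter] at hA
      rw [← hA.2]
      ext x
      simp only [Finset.mem_union, Finset.mem_inter, Finset.mem_sdiff]
      tauto
    · intro D hD
      rw [Finset.mem_powerset] at hD
      ext x
      simp only [Finset.mem_sdiff, Finset.mem_union]
      constructor
      · rintro ⟨hx1 | hx1, hx2⟩
        · exact absurd (hB hx1) hx2
        · exact hx1
      · intro hx
        exact ⟨Or.inr hx, Finset.mem_compl.mp (hD hx)⟩
    · intro A hA
      simp only [Finset.mem_filter] at hA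
      have hcard : A.card = B.card + (A \ I).card := by
        rw [← hA.2]
        rw [← Finset.card_union_of_disjoint (Finset.disjoint_sdiff_inter A I).symm]
        · congr 1
          ext x
          simp only [Finset.mem_union, Finset.mem_inter, Finset.mem_sdiff]
          tauto
      rw [hcard]
  rw [hbij, Finset.sum_powerset]
  have hcompl : Iᶜ.card = q - p := by
    rw [Finset.card_compl, Fintype.card_fin, hI]
  rw [hcompl]
  have hinner : ∀ m ∈ Finset.range (q - p + 1),
      (∑ D ∈ Finset.powersetCard m Iᶜ,
        (if B.card + D.card ≤ p then mu (q - p) (p - (B.card + D.card)) else 0))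
      = ((q-p).choose m : ℤ) * (if B.card + m ≤ p then mu (q - p) (p - B.card - m) else 0) := by
    intro m _
    have := Finset.sum_powersetCard m Iᶜ
      (fun c => if B.card + c ≤ p then mu (q - p) (p - (B.card + c)) else 0)
    rw [this, hcompl, nsmul_eq_mul]
    congr 1
    rw [Nat.sub_add_eq]
  rw [Finset.sum_congr rfl hinner]
  have hb0 : B.card ≤ p := hI ▸ Finset.card_le_card hB
  rw [count_range p (q - p) B.card hb0]
  have : B.card = p ↔ B = I := by
    constructor
    · intro h; exact Finset.eq_of_subset_of_card_le hB (by omega)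
    · intro h; rw [h, hI]
  simp only [this]

/-- A `(p, n)`-system of shadows is realistic if and only if it is realisable. -/
theorem stmt_7 {p q : ℕ} (hp : 0 < p) (hq : 0 < q) (nn : Fin q → ℕ) (hnn : ∀ t, 0 < nn t)
    (S : (i : Fin p → Fin q) → ((t : Fin p) → Fin (nn (i t))) → ℤ) :
    (∀ (i j : Fin p → Fin q), StrictMono i → StrictMono j →
      ∀ (r s : Fin (p - 1) → Fin p), StrictMono r → StrictMono s →
        (fun t => i (r t)) = (fun t => j (s t)) →
          HEq (dproj (S i) r) (dproj (S j) s))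
    ↔ (∃ C : ((t : Fin q) → Fin (nn t)) → ℤ,
        ∀ i : Fin p → Fin q, StrictMono i → dproj C i = S i) := by
  constructor
  · intro H
    by_cases hpq : p ≤ q
    · -- the interesting case
      have pick : ∀ A : Finset (Fin q), A.card ≤ p →
          ∃ i : Fin p → Fin q, StrictMono i ∧ A ⊆ Finset.image i Finset.univ := by
        intro A hA
        obtain ⟨t, hsub, hcard⟩ := Finset.exists_superset_card_eq hA
          (by simpa [Fintype.card_fin] using hpq)
        exact ⟨t.orderEmbOfFin hcard, (t.orderEmbOfFin hcard).strictMono,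
          by rw [image_orderEmbOfFin hcard]; exact hsub⟩
      choose f hf1 hf2 using pick
      set G : Finset (Fin q) → ((t : Fin q) → Fin (nn t)) → ℤ := fun A =>
        if h : A.card ≤ p then Pp hnn A (pad hnn (f A h) (S (f A h))) else 0 with hG
      set C : ((t : Fin q) → Fin (nn t)) → ℤ := fun b =>
        ∑ A ∈ (Finset.univ : Finset (Fin q)).powerset,
          mu (q - p) (p - A.card) * G A b with hC
      refine ⟨C, ?_⟩
      intro i hi
      set I := Finset.image i Finset.univ with hIdef
      have hIcard : I.card = p := by
        rw [hIdef, Finset.card_image_of_injective _ hi.injective, Finset.card_univ,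
          Fintype.card_fin]
      have key1 : ∀ (B : Finset (Fin q)) (hB : B.card ≤ p) (i' : Fin p → Fin q),
          StrictMono i' → B ⊆ Finset.image i' Finset.univ →
          Pp hnn B (pad hnn i' (S i')) = G B := by
        intro B hB i' hi' hBi'
        rw [hG]
        simp only [dif_pos hB]
        exact welldef hnn S hp H _ i' (f B hB) hi' (hf1 B hB) rfl B hBi' (hf2 B hB)
      have PpIGA : ∀ A : Finset (Fin q),
          Pp hnn I (G A) = if hA : A.card ≤ p then G (A ∩ I) else 0 := by
        intro A
        by_cases hA : A.card ≤ p
        · rw [hG]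
          simp only [dif_pos hA]
          rw [Pp_Pp, Finset.inter_comm I A]
          have hAIcard : (A ∩ I).card ≤ p :=
            le_trans (Finset.card_le_card Finset.inter_subset_right) hIcard.le
          rw [dif_pos hAIcard]
          exact welldef hnn S hp H _ (f A hA) (f (A ∩ I) hAIcard) (hf1 A hA)
            (hf1 (A ∩ I) hAIcard) rfl (A ∩ I)
            ((Finset.inter_subset_left).trans (hf2 A hA)) (hf2 (A ∩ I) hAIcard)
        · rw [hG]
          simp only [dif_neg hA]
          funext b
          simp [Pp]
      have main : Pp hnn I C = pad hnn i (S i) := by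
        funext b
        rw [hC]
        simp only [Pp]
        have h1 : ∀ c : (t : Fin q) → Fin (nn t),
            (if zOut hnn I c = b then
              ∑ A ∈ (Finset.univ : Finset (Fin q)).powerset,
                mu (q - p) (p - A.card) * G A c else 0)
            = ∑ A ∈ (Finset.univ : Finset (Fin q)).powerset,
                (if zOut hnn I c = b then mu (q - p) (p - A.card) * G A c else 0) := by
          intro c
          split
          · rfl
          · symm; apply Finset.sum_eq_zero; intro A _; rfl
        simp only [h1]
        rw [Finset.sum_comm]
        have h2 : ∀ A ∈ (Finset.univ : Finset (Fin q)).powerset,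
            (∑ c : (t : Fin q) → Fin (nn t),
              if zOut hnn I c = b then mu (q - p) (p - A.card) * G A c else 0)
            = mu (q - p) (p - A.card) * Pp hnn I (G A) b := by
          intro A _
          rw [Pp, Finset.mul_sum]
          apply Finset.sum_congr rfl
          intro c _
          split <;> simp
        rw [Finset.sum_congr rfl h2]
        have h3 : ∀ A ∈ (Finset.univ : Finset (Fin q)).powerset,
            mu (q - p) (p - A.card) * Pp hnn I (G A) b
            = if A.card ≤ p then mu (q - p) (p - A.card) * G (A ∩ I) b else 0 := by
          intro A _
          rw [PpIGA A]
          by_cases hA : A.card ≤ p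
          · simp only [dif_pos hA, if_pos hA]
          · simp only [dif_neg hA, if_neg hA, Pi.zero_apply, mul_zero]
        rw [Finset.sum_congr rfl h3]
        rw [← Finset.sum_fiberwise_of_maps_to (g := fun A => A ∩ I)
          (t := I.powerset) (fun A _ => Finset.mem_powerset.mpr Finset.inter_subset_right)]
        have h4 : ∀ B ∈ I.powerset,
            (∑ A ∈ Finset.filter (fun A => A ∩ I = B)
                (Finset.univ : Finset (Fin q)).powerset,
              (if A.card ≤ p then mu (q - p) (p - A.card) * G (A ∩ I) b else 0))
            = (if B = I then 1 else 0) * G B b := by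
          intro B hB
          have hBsub : B ⊆ I := Finset.mem_powerset.mp hB
          have h5 : ∀ A ∈ Finset.filter (fun A => A ∩ I = B)
              (Finset.univ : Finset (Fin q)).powerset,
              (if A.card ≤ p then mu (q - p) (p - A.card) * G (A ∩ I) b else 0)
              = (if A.card ≤ p then mu (q - p) (p - A.card) else 0) * G B b := by
            intro A hA
            rw [(Finset.mem_filter.mp hA).2]
            split <;> simp
          rw [Finset.sum_congr rfl h5, ← Finset.sum_mul,
            count_subsets hpq I B hBsub hIcard]
        rw [Finset.sum_congr rfl h4]
        have h6 : ∀ B ∈ I.powerset,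
            (if B = I then 1 else 0) * G B b = if B = I then G B b else 0 := by
          intro B _; split <;> simp
        rw [Finset.sum_congr rfl h6, Finset.sum_ite_eq' I.powerset I (fun B => G B b),
          if_pos (Finset.mem_powerset_self I)]
        have h7 : G I = pad hnn i (S i) := by
          rw [← key1 I hIcard.le i hi (by rw [hIdef])]
          rw [hIdef]
          exact Pp_pad_self hnn i hi.injective (S i)
        rw [h7]
      funext a
      rw [dproj_eq_Pp hnn i hi.injective C a, ← hIdef, main]
      exact pad_pext hnn i hi.injective (S i) a
    · -- p > q : vacuous
      refine ⟨fun _ => 0, fun i hi => absurd ?_ hpq⟩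
      have := Fintype.card_le_of_injective i hi.injective
      simpa using this
  · rintro ⟨C, hC⟩ i j hi hj r s hr hs hrs
    rw [← hC i hi, ← hC j hj, dproj_comp, dproj_comp]
    exact dproj_congr C _ _ hrs
end

section
/- Let $n, q$ be positive integers and $k \in [q]$. If $S \in \mathcal{T}^{n \cdot \mathbf{1}_k}(\mathbb{Z})$ is a $(k-1)$-crystal (i.e., all its projections onto increasing $(k-1)$-tuples of modes are equal), then there exists a $k$-crystal $C \in \mathcal{T}^{n \cdot \mathbf{1}_q}(\mathbb{Z})$ whose $k$-shadow is $S$. -/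
set_option maxHeartbeats 1000000

open Finset

/-- The projection of a cubical tensor `C` onto the modes indexed by `i`. -/
def cproj {q k n : ℕ} (C : (Fin q → Fin n) → ℤ) (i : Fin k → Fin q) :
    (Fin k → Fin n) → ℤ :=
  fun a => ∑ b : Fin q → Fin n, if (fun t => b (i t)) = a then C b else 0

namespace Stmt8Aux

variable {n : ℕ} [NeZero n]

/-- Coefficient-extraction weights for the basis `u = e₀`, `f_x = e_x - e₀`. -/
def cc (x y : Fin n) : ℤ := if x = 0 then 1 else if y = x then 1 else 0

/-- Basis-vector coordinates: `ww x` is the coordinate function of `u` (if `x = 0`)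
or of `f_x` (if `x ≠ 0`). -/
def ww (x y : Fin n) : ℤ :=
  if x = 0 then (if y = 0 then 1 else 0)
  else ((if y = x then 1 else 0) - (if y = 0 then 1 else 0))

lemma ww_sum (x : Fin n) : ∑ y, ww x y = if x = 0 then 1 else 0 := by
  unfold ww
  by_cases hx : x = 0 <;> simp [hx, Finset.sum_sub_distrib]

lemma cw_sum (a' a : Fin n) : ∑ x, cc x a' * ww x a = if a = a' then 1 else 0 := by
  have h : ∀ x : Fin n, cc x a' * ww x a =
      (if x = 0 then (if a = 0 then 1 else 0) else 0)
      + (if a' = x then (if x = 0 then 0 else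
          ((if a = x then 1 else 0) - (if a = 0 then 1 else 0))) else 0) := by
    intro x
    by_cases hx : x = 0 <;> by_cases hxa : a' = x <;> simp [cc, ww, hx, hxa]
  rw [Finset.sum_congr rfl (fun x _ => h x), Finset.sum_add_distrib,
    Finset.sum_ite_eq' univ (0 : Fin n), Finset.sum_ite_eq univ a']
  by_cases ha' : a' = 0 <;> by_cases ha : a = 0 <;> simp [ha', ha]

/-- Coefficients of a tensor `S` in the `u`/`f` basis, indexed by `α` where `α j = 0`
denotes the `u` factor at mode `j` and `α j = x ≠ 0` the `f_x` factor. -/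
def shat {k : ℕ} (S : (Fin k → Fin n) → ℤ) (α : Fin k → Fin n) : ℤ :=
  ∑ a, S a * ∏ j, cc (α j) (a j)

lemma shat_peel {k' : ℕ} (S : (Fin (k' + 1) → Fin n) → ℤ) (α : Fin (k' + 1) → Fin n)
    (p : Fin (k' + 1)) (hp : α p = 0) :
    shat S α = ∑ v : Fin k' → Fin n,
      cproj S p.succAbove v * ∏ s, cc (α (p.succAbove s)) (v s) := by
  unfold shat cproj
  have h : ∀ v : Fin k' → Fin n,
      (∑ a, if (fun t => a (p.succAbove t)) = v then S a else 0) *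
        (∏ s, cc (α (p.succAbove s)) (v s))
      = ∑ a, if (fun t => a (p.succAbove t)) = v then
          S a * ∏ s, cc (α (p.succAbove s)) (v s) else 0 := by
    intro v
    rw [Finset.sum_mul]
    exact Finset.sum_congr rfl fun a _ => by split <;> simp
  rw [Finset.sum_congr rfl fun v _ => h v, Finset.sum_comm]
  refine Finset.sum_congr rfl fun a _ => ?_
  have hcol : (∑ v : Fin k' → Fin n, if (fun t => a (p.succAbove t)) = v then
      S a * ∏ s, cc (α (p.succAbove s)) (v s) else 0)
      = S a * ∏ s, cc (α (p.succAbove s)) (a (p.succAbove s)) := by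
    rw [Finset.sum_ite_eq univ (fun t => a (p.succAbove t))
      (fun v => S a * ∏ s, cc (α (p.succAbove s)) (v s))]
    simp
  rw [hcol, Fin.prod_univ_succAbove (fun j => cc (α j) (a j)) p, hp]
  simp [cc]

lemma swap_succAbove {k' : ℕ} (p : Fin k') (s : Fin k') :
    Equiv.swap p.castSucc p.succ ((p.succ).succAbove s) = (p.castSucc).succAbove s := by
  simp only [Equiv.swap_apply_def, Fin.succAbove, Fin.lt_def, Fin.ext_iff, Fin.coe_castSucc,
    Fin.val_succ]
  split_ifs <;> simp_all [Fin.ext_iff] <;> omega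

lemma shat_swap {k' : ℕ} (S : (Fin (k' + 1) → Fin n) → ℤ)
    (hS : ∀ p q : Fin (k' + 1), cproj S p.succAbove = cproj S q.succAbove)
    (α : Fin (k' + 1) → Fin n) (p : Fin k') (h0 : α p.castSucc = 0) :
    shat S (α ∘ Equiv.swap p.castSucc p.succ) = shat S α := by
  have h0' : (α ∘ Equiv.swap p.castSucc p.succ) p.succ = 0 := by
    simp [Function.comp, Equiv.swap_apply_right, h0]
  rw [shat_peel S α p.castSucc h0, shat_peel S _ p.succ h0', hS p.succ p.castSucc]
  refine Finset.sum_congr rfl fun v _ => ?_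
  congr 1
  exact Finset.prod_congr rfl fun s _ => by
    rw [Function.comp_apply, swap_succAbove p s]

/-- The support of a tuple. -/
def fsupp {m : ℕ} (β : Fin m → Fin n) : Finset (Fin m) := univ.filter (fun t => β t ≠ 0)

/-- The canonical form of a tuple: its nonzero entries, in order, padded by zeros. -/
def canon (k : ℕ) {m : ℕ} (β : Fin m → Fin n) : Fin k → Fin n :=
  fun s => if h : (s : ℕ) < (fsupp β).card then β ((fsupp β).orderEmbOfFin rfl ⟨s, h⟩) else 0

lemma mem_fsupp {m : ℕ} {β : Fin m → Fin n} {t : Fin m} : t ∈ fsupp β ↔ β t ≠ 0 := by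
  simp [fsupp]

lemma orderEmbOfFin_cast {γ : Type*} [LinearOrder γ] (s : Finset γ) {c : ℕ} (h : s.card = c)
    (i : Fin s.card) : s.orderEmbOfFin rfl i = s.orderEmbOfFin h (Fin.cast h i) := by
  have he : (fun j : Fin s.card => s.orderEmbOfFin h (Fin.cast h j)) = ⇑(s.orderEmbOfFin rfl) := by
    apply Finset.orderEmbOfFin_unique
    · intro x; exact Finset.orderEmbOfFin_mem s h _
    · intro x y hxy
      exact (s.orderEmbOfFin h).strictMono (by rwa [Fin.lt_def] at hxy ⊢)
  exact (congrFun he i).symm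

lemma canon_sorted {k' : ℕ} (α : Fin (k' + 1) → Fin n)
    (h : ∀ p : Fin k', α p.castSucc = 0 → α p.succ = 0) : canon (k' + 1) α = α := by
  have hmono : ∀ j : Fin (k' + 1), α j = 0 → ∀ r, j ≤ r → α r = 0 := by
    intro j hj
    intro r
    induction r using Fin.induction with
    | zero => intro hle; rwa [Fin.le_zero_iff.mp hle] at hj
    | succ i ih =>
      intro hle
      by_cases hc : j ≤ i.castSucc
      · exact h i (ih hc)
      · have : j = i.succ := by
          rw [Fin.le_def] at hle hc; rw [Fin.ext_iff]
          simp only [Fin.coe_castSucc, Fin.val_succ] at *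
          omega
        rwa [this] at hj
  have hiff : ∀ j : Fin (k' + 1), α j ≠ 0 ↔ (j : ℕ) < (fsupp α).card := by
    intro j
    constructor
    · intro hj
      have hle : (Finset.range ((j : ℕ) + 1)).card ≤ (fsupp α).card := by
        apply Finset.card_le_card_of_injOn
          (fun t => (⟨t % (k' + 1), Nat.mod_lt _ (Nat.succ_pos _)⟩ : Fin (k' + 1)))
        · intro t ht
          simp only [Finset.mem_coe, Finset.mem_range] at ht
          rw [Finset.mem_coe, mem_fsupp]
          intro hzero
          exact hj (hmono _ hzero j (by
            rw [Fin.le_def]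
            exact le_trans (Nat.mod_le t _) (by omega)))
        · intro x hx y hy hxy
          simp only [Finset.coe_range, Set.mem_Iio] at hx hy
          have : x % (k' + 1) = y % (k' + 1) := congrArg Fin.val hxy
          rwa [Nat.mod_eq_of_lt (by omega), Nat.mod_eq_of_lt (by omega)] at this
      simpa using hle
    · intro hj
      by_contra hz
      have hz0 : α j = 0 := hz
      have hle : (fsupp α).card ≤ (Finset.range (j : ℕ)).card := by
        apply Finset.card_le_card_of_injOn (fun (x : Fin (k' + 1)) => (x : ℕ))
        · intro x hx
          rw [Finset.mem_coe, mem_fsupp] at hx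
          simp only [Finset.mem_coe, Finset.mem_range]
          by_contra hge
          push_neg at hge
          exact hx (hmono j hz0 x (by rwa [Fin.le_def]))
        · intro x _ y _ hxy; exact Fin.ext hxy
      simp only [Finset.card_range] at hle
      omega
  have hck : (fsupp α).card ≤ k' + 1 := (Finset.card_le_univ _).trans_eq (Finset.card_fin _)
  have hf : (fun s : Fin (fsupp α).card => (⟨(s : ℕ), lt_of_lt_of_le s.2 hck⟩ : Fin (k' + 1)))
      = ⇑((fsupp α).orderEmbOfFin rfl) := by
    apply Finset.orderEmbOfFin_unique
    · intro x; rw [mem_fsupp, hiff]; exact x.2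
    · intro x y hxy
      rw [Fin.lt_def] at hxy ⊢
      exact hxy
  funext j
  unfold canon
  split
  · next hlt =>
    have := congrFun hf ⟨(j : ℕ), hlt⟩
    rw [← this]
  · next hlt =>
    exact ((not_not.mp (fun hcon => hlt ((hiff j).mp hcon)))).symm

lemma canon_swap {k' : ℕ} (α : Fin (k' + 1) → Fin n) (p : Fin k')
    (h0 : α p.castSucc = 0) (h1 : α p.succ ≠ 0) :
    canon (k' + 1) (α ∘ Equiv.swap p.castSucc p.succ) = canon (k' + 1) α := by
  set sw := Equiv.swap p.castSucc p.succ with hsw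
  set α' := α ∘ sw with hα'
  have hswinv : ∀ j, sw (sw j) = j := fun j => Equiv.swap_apply_self _ _ j
  have hmem : ∀ j, j ∈ fsupp α' ↔ sw j ∈ fsupp α := by
    intro j; rw [mem_fsupp, mem_fsupp]; rfl
  have himg : fsupp α' = (fsupp α).image sw := by
    ext j
    rw [Finset.mem_image, hmem]
    constructor
    · intro hj; exact ⟨sw j, hj, hswinv j⟩
    · rintro ⟨x, hx, rfl⟩; rwa [hswinv]
  have hcard : (fsupp α').card = (fsupp α).card := by
    rw [himg, Finset.card_image_of_injective _ (Equiv.injective _)]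
  have hns : ∀ u ∈ fsupp α', u ≠ p.succ := by
    intro u hu
    rw [hmem] at hu
    intro hc
    rw [hc] at hu
    rw [mem_fsupp] at hu
    exact hu (by rwa [hsw, Equiv.swap_apply_right])
  have hswlt : ∀ u v, u ∈ fsupp α' → v ∈ fsupp α' → u < v → sw u < sw v := by
    intro u v hu hv huv
    have hu' := hns u hu
    have hv' := hns v hv
    by_cases hup : u = p.castSucc
    · subst hup
      rw [hsw, Equiv.swap_apply_left, Equiv.swap_apply_of_ne_of_ne (ne_of_gt huv) hv']
      rw [Fin.lt_def] at *
      simp only [Fin.coe_castSucc, Fin.val_succ] at *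
      have : (v : ℕ) ≠ (p : ℕ) + 1 := fun hc => hv' (Fin.ext (by simpa using hc))
      omega
    · by_cases hvp : v = p.castSucc
      · subst hvp
        rw [hsw, Equiv.swap_apply_of_ne_of_ne hup hu', Equiv.swap_apply_left]
        exact huv.trans (Fin.castSucc_lt_succ : p.castSucc < p.succ)
      · rwa [hsw, Equiv.swap_apply_of_ne_of_ne hup hu', Equiv.swap_apply_of_ne_of_ne hvp hv']
  have hg : (fun s : Fin (fsupp α).card => sw ((fsupp α').orderEmbOfFin hcard s))
      = ⇑((fsupp α).orderEmbOfFin rfl) := by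
    apply Finset.orderEmbOfFin_unique
    · intro x
      rw [← hmem]
      exact Finset.orderEmbOfFin_mem _ hcard x
    · intro x y hxy
      exact hswlt _ _ (Finset.orderEmbOfFin_mem _ hcard x) (Finset.orderEmbOfFin_mem _ hcard y)
        (((fsupp α').orderEmbOfFin hcard).strictMono hxy)
  funext s
  unfold canon
  by_cases hs : (s : ℕ) < (fsupp α).card
  · rw [dif_pos (show (s : ℕ) < (fsupp α').card from hcard ▸ hs), dif_pos hs]
    rw [orderEmbOfFin_cast (fsupp α') hcard]
    have hcast : Fin.cast hcard ⟨(s : ℕ), hcard ▸ hs⟩ = ⟨(s : ℕ), hs⟩ := Fin.ext rfl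
    rw [hcast]
    have := congrFun hg ⟨(s : ℕ), hs⟩
    rw [← this]
    rfl
  · rw [dif_neg (show ¬ (s : ℕ) < (fsupp α').card from by rw [hcard]; exact hs),
      dif_neg hs]

lemma shat_canon {k' : ℕ} (S : (Fin (k' + 1) → Fin n) → ℤ)
    (hS : ∀ p q : Fin (k' + 1), cproj S p.succAbove = cproj S q.succAbove)
    (α : Fin (k' + 1) → Fin n) :
    shat S (canon (k' + 1) α) = shat S α := by
  suffices h : ∀ (N : ℕ) (α : Fin (k' + 1) → Fin n),
      (∑ j, if α j = 0 then 0 else (j : ℕ)) = N → shat S (canon (k' + 1) α) = shat S α from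
    h _ α rfl
  intro N
  induction N using Nat.strong_induction_on with
  | _ N ih =>
    intro α hμ
    by_cases hsrt : ∀ p : Fin k', α p.castSucc = 0 → α p.succ = 0
    · rw [canon_sorted α hsrt]
    · push_neg at hsrt
      obtain ⟨p, hp0, hp1⟩ := hsrt
      rw [← canon_swap α p hp0 hp1, ← shat_swap S hS α p hp0]
      set sw := Equiv.swap p.castSucc p.succ with hsw
      set α' := α ∘ sw with hα'
      have hswinv : ∀ j, sw (sw j) = j := fun j => Equiv.swap_apply_self _ _ j
      have hμ' : (∑ j, if α' j = 0 then 0 else (j : ℕ))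
          = ∑ j, if α j = 0 then 0 else ((sw j : Fin (k' + 1)) : ℕ) := by
        have h1 : ∀ j, (if α' j = 0 then 0 else (j : ℕ))
            = (fun x => if α x = 0 then 0 else ((sw x : Fin (k' + 1)) : ℕ)) (sw j) := by
          intro j
          simp only [hα', Function.comp_apply, hswinv]
        have h2 : (∑ j, if α' j = 0 then 0 else (j : ℕ))
            = ∑ j, (fun x => if α x = 0 then 0 else ((sw x : Fin (k' + 1)) : ℕ)) (sw j) :=
          Finset.sum_congr rfl fun j _ => h1 j
        rw [h2]
        exact Equiv.sum_comp sw (fun x => if α x = 0 then 0 else ((sw x : Fin (k' + 1)) : ℕ))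
      have hlt : (∑ j, if α' j = 0 then 0 else (j : ℕ)) < N := by
        rw [hμ', ← hμ]
        apply Finset.sum_lt_sum
        · intro j _
          by_cases hj0 : α j = 0
          · simp [hj0]
          · rw [if_neg hj0, if_neg hj0]
            by_cases hjc : j = p.castSucc
            · exact absurd (hjc ▸ hp0) hj0
            · by_cases hjs : j = p.succ
              · subst hjs
                rw [hsw, Equiv.swap_apply_right]
                simp [Fin.le_def]
              · rw [hsw, Equiv.swap_apply_of_ne_of_ne hjc hjs]
        · refine ⟨p.succ, Finset.mem_univ _, ?_⟩
          rw [if_neg hp1, if_neg hp1, hsw, Equiv.swap_apply_right]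
          simp [Fin.lt_def]
      exact ih _ hlt α' rfl

lemma canon_comp {q k : ℕ} (em : Fin k → Fin q) (hi : StrictMono em) (α : Fin k → Fin n) :
    canon k (Function.extend em α 0) = canon k α := by
  set β := Function.extend em α 0 with hβ
  have hb1 : ∀ s, β (em s) = α s := fun s => hi.injective.extend_apply α 0 s
  have hb2 : ∀ t, (¬ ∃ s, em s = t) → β t = 0 :=
    fun t ht => Function.extend_apply' α (0 : (Fin q → Fin n)) t ht
  have himg : fsupp β = (fsupp α).image em := by
    ext t
    rw [mem_fsupp, Finset.mem_image]
    constructor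
    · intro hβt
      by_cases hr : ∃ s, em s = t
      · obtain ⟨s, rfl⟩ := hr
        exact ⟨s, mem_fsupp.mpr (by rwa [hb1 s] at hβt), rfl⟩
      · exact absurd (hb2 t hr) hβt
    · rintro ⟨s, hs, rfl⟩
      rw [hb1 s]
      exact mem_fsupp.mp hs
  have hcard : (fsupp β).card = (fsupp α).card := by
    rw [himg, Finset.card_image_of_injective _ hi.injective]
  have hg : (fun s : Fin (fsupp α).card => em ((fsupp α).orderEmbOfFin rfl s))
      = ⇑((fsupp β).orderEmbOfFin hcard) := by
    apply Finset.orderEmbOfFin_unique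
    · intro x
      rw [himg]
      exact Finset.mem_image_of_mem em (Finset.orderEmbOfFin_mem _ rfl x)
    · exact hi.comp ((fsupp α).orderEmbOfFin rfl).strictMono
  funext s
  unfold canon
  by_cases hs : (s : ℕ) < (fsupp α).card
  · rw [dif_pos hs, dif_pos (show (s : ℕ) < (fsupp β).card from hcard ▸ hs)]
    rw [orderEmbOfFin_cast (fsupp β) hcard]
    have hcast : Fin.cast hcard ⟨(s : ℕ), hcard ▸ hs⟩ = ⟨(s : ℕ), hs⟩ := Fin.ext rfl
    rw [hcast, ← congrFun hg ⟨(s : ℕ), hs⟩]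
    exact hb1 _
  · rw [dif_neg (show ¬ (s : ℕ) < (fsupp β).card from by rw [hcard]; exact hs), dif_neg hs]

lemma sum_pi_prod {m : ℕ} (F : Fin m → Fin n → ℤ) :
    ∑ b : Fin m → Fin n, ∏ t, F t (b t) = ∏ t, ∑ y, F t y := by
  rw [Finset.prod_univ_sum]
  rw [Fintype.piFinset_univ]

lemma factor {q k : ℕ} (em : Fin k → Fin q) (hi : Function.Injective em)
    (β : Fin q → Fin n) (a : Fin k → Fin n) :
    (∑ b : Fin q → Fin n, if (fun t => b (em t)) = a then (∏ t, ww (β t) (b t)) else 0)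
      = (∏ s, ww (β (em s)) (a s)) *
        ∏ t ∈ (univ.image em)ᶜ, (if β t = 0 then 1 else 0) := by
  have h1 : ∀ b : Fin q → Fin n,
      (if (fun t => b (em t)) = a then (∏ t, ww (β t) (b t)) else 0)
      = ∏ t, ((∏ s ∈ univ.filter (fun s => em s = t), (if b t = a s then 1 else 0))
          * ww (β t) (b t)) := by
    intro b
    rw [Finset.prod_mul_distrib]
    have hD : (∏ t, ∏ s ∈ univ.filter (fun s => em s = t), (if b t = a s then (1 : ℤ) else 0))
        = ∏ s : Fin k, (if b (em s) = a s then (1 : ℤ) else 0) := by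
      rw [← Finset.prod_fiberwise univ em (fun s => if b (em s) = a s then (1 : ℤ) else 0)]
      refine Finset.prod_congr rfl fun t _ => Finset.prod_congr rfl fun s hs => ?_
      rw [Finset.mem_filter] at hs
      rw [hs.2]
    rw [hD, Finset.prod_boole]
    have hcond : ((fun t => b (em t)) = a) ↔ (∀ s ∈ univ, b (em s) = a s) := by
      rw [funext_iff]; simp
    by_cases hc : (fun t => b (em t)) = a
    · rw [if_pos hc, if_pos (hcond.mp hc), one_mul]
    · rw [if_neg hc, if_neg (fun hh => hc (hcond.mpr hh)), zero_mul]
  have h2 : (∑ b : Fin q → Fin n, if (fun t => b (em t)) = a then (∏ t, ww (β t) (b t)) else 0)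
      = ∏ t, ∑ y, ((∏ s ∈ univ.filter (fun s => em s = t), (if y = a s then 1 else 0))
          * ww (β t) y) :=
    (Finset.sum_congr rfl fun b _ => h1 b).trans
      (sum_pi_prod (fun t y => (∏ s ∈ univ.filter (fun s => em s = t),
        (if y = a s then (1 : ℤ) else 0)) * ww (β t) y))
  rw [h2, ← Finset.prod_mul_prod_compl (univ.image em)]
  congr 1
  · rw [Finset.prod_image (fun x _ y _ h => hi h)]
    refine Finset.prod_congr rfl fun s _ => ?_
    have hfib : univ.filter (fun s' => em s' = em s) = {s} := by
      ext s'; simp [hi.eq_iff]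
    rw [hfib]
    simp only [Finset.prod_singleton]
    have h3 : ∀ y, (if y = a s then (1 : ℤ) else 0) * ww (β (em s)) y
        = if y = a s then ww (β (em s)) y else 0 := by
      intro y; split <;> simp
    rw [Finset.sum_congr rfl fun y _ => h3 y, Finset.sum_ite_eq' univ (a s)]
    simp
  · refine Finset.prod_congr rfl fun t ht => ?_
    have hfib : univ.filter (fun s => em s = t) = ∅ := by
      rw [Finset.mem_compl] at ht
      ext s
      simp only [Finset.mem_filter, Finset.mem_univ, true_and, Finset.notMem_empty, iff_false]
      exact fun hc => ht (Finset.mem_image.mpr ⟨s, Finset.mem_univ s, hc⟩)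
    rw [Finset.sum_congr rfl fun y _ => by rw [hfib, Finset.prod_empty, one_mul]]
    exact ww_sum (β t)

/-- The crystal: expand along supports, using the common shadow coefficients. -/
def CC {q k : ℕ} (S : (Fin k → Fin n) → ℤ) (b : Fin q → Fin n) : ℤ :=
  ∑ β : Fin q → Fin n, shat S (canon k β) * ∏ t, ww (β t) (b t)

lemma shat_inv {k : ℕ} (S : (Fin k → Fin n) → ℤ) (a : Fin k → Fin n) :
    ∑ α : Fin k → Fin n, shat S α * ∏ s, ww (α s) (a s) = S a := by
  unfold shat
  have h1 : ∀ α : Fin k → Fin n,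
      (∑ a', S a' * ∏ j, cc (α j) (a' j)) * ∏ s, ww (α s) (a s)
      = ∑ a', S a' * ∏ j, (cc (α j) (a' j) * ww (α j) (a j)) := by
    intro α
    rw [Finset.sum_mul]
    exact Finset.sum_congr rfl fun a' _ => by rw [Finset.prod_mul_distrib, mul_assoc]
  rw [Finset.sum_congr rfl fun α _ => h1 α, Finset.sum_comm]
  have h2 : ∀ a' : Fin k → Fin n,
      (∑ α : Fin k → Fin n, S a' * ∏ j, (cc (α j) (a' j) * ww (α j) (a j)))
      = S a' * if a = a' then 1 else 0 := by
    intro a'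
    rw [← Finset.mul_sum]
    congr 1
    rw [sum_pi_prod (fun j x => cc x (a' j) * ww x (a j))]
    have h3 : ∀ j, (∑ x, cc x (a' j) * ww x (a j)) = if a j = a' j then (1 : ℤ) else 0 :=
      fun j => cw_sum (a' j) (a j)
    rw [Finset.prod_congr rfl fun j _ => h3 j, Finset.prod_boole]
    by_cases hc : a = a'
    · rw [if_pos hc, if_pos fun j _ => by rw [hc]]
    · rw [if_neg hc, if_neg (fun hh => hc (funext fun j => hh j (Finset.mem_univ j)))]
  rw [Finset.sum_congr rfl fun a' _ => h2 a']
  have h4 : ∀ a' : Fin k → Fin n, (S a' * if a = a' then (1 : ℤ) else 0)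
      = if a' = a then S a' else 0 := by
    intro a'
    by_cases hc : a = a'
    · rw [if_pos hc, if_pos hc.symm, mul_one]
    · rw [if_neg hc, if_neg (fun hh => hc hh.symm), mul_zero]
  rw [Finset.sum_congr rfl fun a' _ => h4 a', Finset.sum_ite_eq' univ a S]
  simp

lemma cproj_CC {q k' : ℕ} (S : (Fin (k' + 1) → Fin n) → ℤ)
    (hS : ∀ p q : Fin (k' + 1), cproj S p.succAbove = cproj S q.succAbove)
    (i : Fin (k' + 1) → Fin q) (hi : StrictMono i) : cproj (CC S) i = S := by
  funext a
  show (∑ b : Fin q → Fin n, if (fun t => b (i t)) = a then CC S b else 0) = S a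
  have hA : ∀ b : Fin q → Fin n, (if (fun t => b (i t)) = a then CC S b else 0)
      = ∑ β : Fin q → Fin n, (if (fun t => b (i t)) = a then
          shat S (canon (k' + 1) β) * ∏ t, ww (β t) (b t) else 0) := by
    intro b
    unfold CC
    split <;> simp
  rw [Finset.sum_congr rfl fun b _ => hA b, Finset.sum_comm]
  have hB : ∀ β : Fin q → Fin n,
      (∑ b : Fin q → Fin n, if (fun t => b (i t)) = a then
        shat S (canon (k' + 1) β) * ∏ t, ww (β t) (b t) else 0)
      = shat S (canon (k' + 1) β) * ((∏ s, ww (β (i s)) (a s)) *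
          ∏ t ∈ (univ.image i)ᶜ, (if β t = 0 then 1 else 0)) := by
    intro β
    rw [← factor i hi.injective β a, Finset.mul_sum]
    exact Finset.sum_congr rfl fun b _ => by split <;> simp
  rw [Finset.sum_congr rfl fun β _ => hB β]
  have hC : ∀ β : Fin q → Fin n,
      shat S (canon (k' + 1) β) * ((∏ s, ww (β (i s)) (a s)) *
          ∏ t ∈ (univ.image i)ᶜ, (if β t = 0 then 1 else 0))
      = if (∀ t ∈ (univ.image i)ᶜ, β t = 0) then
          shat S (canon (k' + 1) β) * ∏ s, ww (β (i s)) (a s) else 0 := by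
    intro β
    rw [Finset.prod_boole]
    split <;> simp [mul_comm]
  rw [Finset.sum_congr rfl fun β _ => hC β, ← Finset.sum_filter]
  have hD : (∑ β ∈ univ.filter (fun β : Fin q → Fin n => ∀ t ∈ (univ.image i)ᶜ, β t = 0),
      shat S (canon (k' + 1) β) * ∏ s, ww (β (i s)) (a s))
      = ∑ α : Fin (k' + 1) → Fin n, shat S (canon (k' + 1) (Function.extend i α 0)) *
          ∏ s, ww (α s) (a s) := by
    apply Finset.sum_nbij' (fun β => β ∘ i) (fun α => Function.extend i α (0 : Fin q → Fin n))
    · intro β _; exact Finset.mem_univ _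
    · intro α _
      rw [Finset.mem_filter]
      refine ⟨Finset.mem_univ _, fun t ht => ?_⟩
      rw [Finset.mem_compl] at ht
      refine Function.extend_apply' α (0 : Fin q → Fin n) t (fun ⟨s, hc⟩ =>
        ht (Finset.mem_image.mpr ⟨s, Finset.mem_univ s, hc⟩))
    · intro β hβ
      rw [Finset.mem_filter] at hβ
      funext t
      by_cases hr : ∃ s, i s = t
      · obtain ⟨s, rfl⟩ := hr
        exact hi.injective.extend_apply (β ∘ i) 0 s
      · rw [Function.extend_apply' _ _ _ hr]
        exact (hβ.2 t (Finset.mem_compl.mpr fun hc => hr (by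
          obtain ⟨s, _, hc'⟩ := Finset.mem_image.mp hc; exact ⟨s, hc'⟩))).symm
    · intro α _
      funext s
      exact hi.injective.extend_apply α 0 s
    · intro β hβ
      rw [Finset.mem_filter] at hβ
      have hext : Function.extend i (β ∘ i) 0 = β := by
        funext t
        by_cases hr : ∃ s, i s = t
        · obtain ⟨s, rfl⟩ := hr
          exact hi.injective.extend_apply (β ∘ i) 0 s
        · rw [Function.extend_apply' _ _ _ hr]
          exact (hβ.2 t (Finset.mem_compl.mpr fun hc => hr (by
            obtain ⟨s, _, hc'⟩ := Finset.mem_image.mp hc; exact ⟨s, hc'⟩))).symm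
      rw [hext]
      rfl
  rw [hD]
  have hE : ∀ α : Fin (k' + 1) → Fin n,
      shat S (canon (k' + 1) (Function.extend i α 0)) * ∏ s, ww (α s) (a s)
      = shat S α * ∏ s, ww (α s) (a s) := by
    intro α
    rw [canon_comp i hi α, shat_canon S hS α]
  rw [Finset.sum_congr rfl fun α _ => hE α]
  exact shat_inv S a

end Stmt8Aux

/-- Crystalisation: every `(k-1)`-crystal `S` of dimension `k` is the `k`-shadow
of some `k`-crystal `C` of dimension `q`. -/
theorem stmt_8 {n q k : ℕ} (hn : 0 < n) (hq : 0 < q) (hk1 : 1 ≤ k) (hkq : k ≤ q)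
    (S : (Fin k → Fin n) → ℤ)
    (hS : ∀ i j : Fin (k - 1) → Fin k, StrictMono i → StrictMono j →
      cproj S i = cproj S j) :
    ∃ C : (Fin q → Fin n) → ℤ, ∀ i : Fin k → Fin q, StrictMono i → cproj C i = S := by
  haveI : NeZero n := ⟨hn.ne'⟩
  obtain ⟨k', rfl⟩ : ∃ k', k = k' + 1 := ⟨k - 1, by omega⟩
  have hS' : ∀ p q : Fin (k' + 1), cproj S p.succAbove = cproj S q.succAbove :=
    fun p q => hS _ _ (Fin.strictMono_succAbove p) (Fin.strictMono_succAbove q)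
  exact ⟨Stmt8Aux.CC S, fun i hi => Stmt8Aux.cproj_CC S hS' i hi⟩
end
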